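/- Let G and G' be compact Hausdorff topological groups. Let A, B be closed subgroups of G such that every element of A commutes with every element of B, G = AB, and Γ := A ∩ B is finite; let A', B' be closed subgroups of G' such that every element of A' commutes with every element of B', G' = A'B', and Γ' := A' ∩ B' is finite. Suppose there are: a group isomorphism f^Γ : Γ → Γ'; a Γ-equivariant homotopy equivalence f^A : A → A' (with respect to the subgroups Γ ≤ A and Γ' ≤ A'); and a Γ-equivariant homotopy equivalence f^B : B → B' (with respect to the subgroups Γ ≤ B and Γ' ≤ B'), such that the restrictions of f^A and f^B to Γ both equal f^Γ. Then there is a Γ-equivariant homotopy equivalence f^G : G → G' (with respect to Γ ≤ G and Γ' ≤ G') such that f^G(ab) = f^A(a)·f^B(b) for all a ∈ A and b ∈ B; in particular f^G restricted to A equals f^A and f^G restricted to B equals f^B. -/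

import Mathlib

open unitInterval

/-- `f : G → G'` is a `Γ`-equivariant homotopy equivalence with specified homotopy inverse
`f' : G' → G` (with respect to the subgroups `Γ ≤ G` and `Γ' ≤ G'`). -/
def IsEquivariantHtpyEquivWith {G G' : Type*} [Group G] [TopologicalSpace G]
    [Group G'] [TopologicalSpace G'] (Γ : Subgroup G) (Γ' : Subgroup G')
    (f : G → G') (f' : G' → G) : Prop :=
  Continuous f ∧ Continuous f' ∧
  -- `f` restricted to `Γ` is a group isomorphism onto `Γ'` (it is multiplicative by the
  -- condition `f (c * x) = f c * f x` below, and bijective onto `Γ'`):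
  Set.BijOn f (Γ : Set G) (Γ' : Set G') ∧
  f 1 = 1 ∧ (∀ c ∈ Γ, ∀ x : G, f (c * x) = f c * f x) ∧
  f' 1 = 1 ∧ (∀ c' ∈ Γ', ∀ x' : G', f' (c' * x') = f' c' * f' x') ∧
  -- a homotopy from the identity of `G` to `f' ∘ f`, fixing `Γ` and `Γ`-equivariant:
  (∃ h : C(I × G, G),
    (∀ x : G, h (0, x) = x) ∧ (∀ x : G, h (1, x) = f' (f x)) ∧
    (∀ t : I, ∀ c ∈ Γ, h (t, c) = c) ∧
    (∀ t : I, ∀ c ∈ Γ, ∀ x : G, h (t, c * x) = c * h (t, x))) ∧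
  -- a homotopy from the identity of `G'` to `f ∘ f'`, fixing `Γ'` and `Γ'`-equivariant:
  (∃ h' : C(I × G', G'),
    (∀ x' : G', h' (0, x') = x') ∧ (∀ x' : G', h' (1, x') = f (f' x')) ∧
    (∀ t : I, ∀ c' ∈ Γ', h' (t, c') = c') ∧
    (∀ t : I, ∀ c' ∈ Γ', ∀ x' : G', h' (t, c' * x') = c' * h' (t, x')))

/-- `f : G → G'` is a `Γ`-equivariant homotopy equivalence (with respect to the subgroups
`Γ ≤ G` and `Γ' ≤ G'`). -/
def IsEquivariantHtpyEquiv {G G' : Type*} [Group G] [TopologicalSpace G]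
    [Group G'] [TopologicalSpace G'] (Γ : Subgroup G) (Γ' : Subgroup G')
    (f : G → G') : Prop :=
  ∃ f' : G' → G, IsEquivariantHtpyEquivWith Γ Γ' f f'

open Topology

private lemma glue_wd {G G' : Type*} [Group G] [Group G']
    (A B : Subgroup G) (A' B' : Subgroup G')
    (hcomm : ∀ a ∈ A, ∀ b ∈ B, a * b = b * a)
    (hcomm' : ∀ a ∈ A', ∀ b ∈ B', a * b = b * a)
    (fA : ↥A → ↥A') (fB : ↥B → ↥B')
    (hfAmul : ∀ c ∈ (A ⊓ B).subgroupOf A, ∀ x, fA (c * x) = fA c * fA x)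
    (hfBmul : ∀ c ∈ (A ⊓ B).subgroupOf B, ∀ x, fB (c * x) = fB c * fB x)
    (hfB1 : fB 1 = 1)
    (hagree : ∀ c : G, ∀ hc : c ∈ A ⊓ B,
      ((fA ⟨c, hc.1⟩ : ↥A') : G') = ((fB ⟨c, hc.2⟩ : ↥B') : G') ∧
      ((fA ⟨c, hc.1⟩ : ↥A') : G') ∈ A' ⊓ B')
    (a a₁ : ↥A) (b b₁ : ↥B) (hab : (a : G) * b = (a₁ : G) * b₁) :
    ((fA a : ↥A') : G') * ((fB b : ↥B') : G')
      = ((fA a₁ : ↥A') : G') * ((fB b₁ : ↥B') : G') := by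
  have hcA : ((a₁ : G)⁻¹ * a) ∈ A := mul_mem (inv_mem a₁.2) a.2
  set c : G := (a₁ : G)⁻¹ * a with hc_def
  have hceq : c = (b₁ : G) * (b : G)⁻¹ := by
    have h : (a : G) = (a₁ : G) * b₁ * (b : G)⁻¹ := by rw [← hab]; group
    rw [hc_def, h]; group
  have hcB : c ∈ B := hceq ▸ mul_mem b₁.2 (inv_mem b.2)
  have hcAB : c ∈ A ⊓ B := ⟨hcA, hcB⟩
  set cA : ↥A := ⟨c, hcA⟩ with hcA_def
  set cB : ↥B := ⟨c, hcB⟩ with hcB_def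
  have hcAm : cA ∈ (A ⊓ B).subgroupOf A := by
    rw [Subgroup.mem_subgroupOf]; exact hcAB
  have hcBm : cB ∈ (A ⊓ B).subgroupOf B := by
    rw [Subgroup.mem_subgroupOf]; exact hcAB
  have ha : a = cA * a₁ := by
    apply Subtype.ext
    show (a : G) = c * a₁
    rw [← hcomm (a₁ : G) a₁.2 c hcB, hc_def]
    group
  have hb : b = cB⁻¹ * b₁ := by
    apply Subtype.ext
    show (b : G) = c⁻¹ * b₁
    rw [hceq]; group
  have hfacB : fB cB⁻¹ = (fB cB)⁻¹ := by
    have h1 := hfBmul cB⁻¹ (inv_mem hcBm) cB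
    rw [inv_mul_cancel, hfB1] at h1
    exact eq_inv_of_mul_eq_one_left h1.symm
  rw [ha, hb, hfAmul cA hcAm a₁, hfBmul cB⁻¹ (inv_mem hcBm) b₁, hfacB]
  obtain ⟨hag, hmem⟩ := hagree c hcAB
  have hag' : ((fA cA : ↥A') : G') = ((fB cB : ↥B') : G') := hag
  have hmem' : ((fA cA : ↥A') : G') ∈ A' ⊓ B' := hmem
  push_cast
  rw [← hag']
  set γ : G' := ((fA cA : ↥A') : G')
  have hcommγ : ((fA a₁ : ↥A') : G') * γ⁻¹ = γ⁻¹ * ((fA a₁ : ↥A') : G') :=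
    hcomm' ((fA a₁ : ↥A') : G') (fA a₁).2 γ⁻¹ (inv_mem hmem'.2)
  calc γ * ((fA a₁ : ↥A') : G') * (γ⁻¹ * ((fB b₁ : ↥B') : G'))
      = γ * (((fA a₁ : ↥A') : G') * γ⁻¹) * ((fB b₁ : ↥B') : G') := by group
    _ = γ * (γ⁻¹ * ((fA a₁ : ↥A') : G')) * ((fB b₁ : ↥B') : G') := by rw [hcommγ]
    _ = ((fA a₁ : ↥A') : G') * ((fB b₁ : ↥B') : G') := by group

/-- Gluing `Γ`-equivariant homotopy equivalences along an almost direct product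
`G = A ×_Γ B`, `G' = A' ×_{Γ'} B'`. -/
theorem glue_equivariant_htpy_equiv {G G' : Type*}
    [Group G] [TopologicalSpace G] [IsTopologicalGroup G] [CompactSpace G] [T2Space G]
    [Group G'] [TopologicalSpace G'] [IsTopologicalGroup G'] [CompactSpace G'] [T2Space G']
    (A B : Subgroup G) (hA : IsClosed (A : Set G)) (hB : IsClosed (B : Set G))
    (hcomm : ∀ a ∈ A, ∀ b ∈ B, a * b = b * a)
    (hAB : ∀ g : G, ∃ a ∈ A, ∃ b ∈ B, g = a * b)
    (hfin : ((A ⊓ B : Subgroup G) : Set G).Finite)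
    (A' B' : Subgroup G') (hA' : IsClosed (A' : Set G')) (hB' : IsClosed (B' : Set G'))
    (hcomm' : ∀ a ∈ A', ∀ b ∈ B', a * b = b * a)
    (hAB' : ∀ g : G', ∃ a ∈ A', ∃ b ∈ B', g = a * b)
    (hfin' : ((A' ⊓ B' : Subgroup G') : Set G').Finite)
    -- a group isomorphism `f^Γ : Γ → Γ'`:
    (fΓ : ↥(A ⊓ B) ≃* ↥(A' ⊓ B'))
    -- a `Γ`-equivariant homotopy equivalence `f^A : A → A'`:
    (fA : ↥A → ↥A')
    (hfA : IsEquivariantHtpyEquiv ((A ⊓ B).subgroupOf A) ((A' ⊓ B').subgroupOf A') fA)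
    -- a `Γ`-equivariant homotopy equivalence `f^B : B → B'`:
    (fB : ↥B → ↥B')
    (hfB : IsEquivariantHtpyEquiv ((A ⊓ B).subgroupOf B) ((A' ⊓ B').subgroupOf B') fB)
    -- the restrictions of `f^A` and `f^B` to `Γ` both equal `f^Γ`:
    (hresA : ∀ c : G, ∀ hc : c ∈ A ⊓ B, ((fA ⟨c, hc.1⟩ : ↥A') : G') = ((fΓ ⟨c, hc⟩ : ↥(A' ⊓ B')) : G'))
    (hresB : ∀ c : G, ∀ hc : c ∈ A ⊓ B, ((fB ⟨c, hc.2⟩ : ↥B') : G') = ((fΓ ⟨c, hc⟩ : ↥(A' ⊓ B')) : G')) :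
    ∃ fG : G → G', IsEquivariantHtpyEquiv (A ⊓ B) (A' ⊓ B') fG ∧
      (∀ a : G, ∀ ha : a ∈ A, ∀ b : G, ∀ hb : b ∈ B,
        fG (a * b) = ((fA ⟨a, ha⟩ : ↥A') : G') * ((fB ⟨b, hb⟩ : ↥B') : G')) ∧
      (∀ a : G, ∀ ha : a ∈ A, fG a = ((fA ⟨a, ha⟩ : ↥A') : G')) ∧
      (∀ b : G, ∀ hb : b ∈ B, fG b = ((fB ⟨b, hb⟩ : ↥B') : G')) := by
    classical
  obtain ⟨fA', cfA, cfA', bijA, fA1, fAmul, fA'1, fA'mul,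
    ⟨HA, HA0, HA1, HAfix, HAeqv⟩, ⟨HA', HA'0, HA'1, HA'fix, HA'eqv⟩⟩ := hfA
  obtain ⟨fB', cfB, cfB', bijB, fB1, fBmul, fB'1, fB'mul,
    ⟨HB, HB0, HB1, HBfix, HBeqv⟩, ⟨HB', HB'0, HB'1, HB'fix, HB'eqv⟩⟩ := hfB
  choose aD haD bD hbD habD using hAB
  choose aD' haD' bD' hbD' habD' using hAB'
  -- agreement of `fA` and `fB` on `Γ`
  have hagree : ∀ c : G, ∀ hc : c ∈ A ⊓ B,
      ((fA ⟨c, hc.1⟩ : ↥A') : G') = ((fB ⟨c, hc.2⟩ : ↥B') : G') ∧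
      ((fA ⟨c, hc.1⟩ : ↥A') : G') ∈ A' ⊓ B' := by
    intro c hc
    constructor
    · rw [hresA c hc, hresB c hc]
    · rw [hresA c hc]; exact (fΓ ⟨c, hc⟩).2
  -- the homotopy inverses restrict to `fΓ.symm` on `Γ'`
  have hresA' : ∀ c' : G', ∀ hc' : c' ∈ A' ⊓ B',
      ((fA' ⟨c', hc'.1⟩ : ↥A) : G) = ((fΓ.symm ⟨c', hc'⟩ : ↥(A ⊓ B)) : G) := by
    intro c' hc'
    set c : ↥(A ⊓ B) := fΓ.symm ⟨c', hc'⟩ with hc_def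
    have hmem : (⟨(c : G), c.2.1⟩ : ↥A) ∈ (A ⊓ B).subgroupOf A := by
      rw [Subgroup.mem_subgroupOf]; exact c.2
    have hceq : fA ⟨(c : G), c.2.1⟩ = ⟨c', hc'.1⟩ := by
      apply Subtype.ext
      rw [hresA (c : G) c.2]
      show ((fΓ c : ↥(A' ⊓ B')) : G') = c'
      rw [hc_def, fΓ.apply_symm_apply]
    calc ((fA' ⟨c', hc'.1⟩ : ↥A) : G)
        = ((fA' (fA ⟨(c : G), c.2.1⟩) : ↥A) : G) := by rw [hceq]
      _ = ((HA (1, ⟨(c : G), c.2.1⟩) : ↥A) : G) := by rw [HA1]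
      _ = (c : G) := by rw [HAfix 1 _ hmem]
  have hresB' : ∀ c' : G', ∀ hc' : c' ∈ A' ⊓ B',
      ((fB' ⟨c', hc'.2⟩ : ↥B) : G) = ((fΓ.symm ⟨c', hc'⟩ : ↥(A ⊓ B)) : G) := by
    intro c' hc'
    set c : ↥(A ⊓ B) := fΓ.symm ⟨c', hc'⟩ with hc_def
    have hmem : (⟨(c : G), c.2.2⟩ : ↥B) ∈ (A ⊓ B).subgroupOf B := by
      rw [Subgroup.mem_subgroupOf]; exact c.2
    have hceq : fB ⟨(c : G), c.2.2⟩ = ⟨c', hc'.2⟩ := by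
      apply Subtype.ext
      rw [hresB (c : G) c.2]
      show ((fΓ c : ↥(A' ⊓ B')) : G') = c'
      rw [hc_def, fΓ.apply_symm_apply]
    calc ((fB' ⟨c', hc'.2⟩ : ↥B) : G)
        = ((fB' (fB ⟨(c : G), c.2.2⟩) : ↥B) : G) := by rw [hceq]
      _ = ((HB (1, ⟨(c : G), c.2.2⟩) : ↥B) : G) := by rw [HB1]
      _ = (c : G) := by rw [HBfix 1 _ hmem]
  have hagree' : ∀ c' : G', ∀ hc' : c' ∈ A' ⊓ B',
      ((fA' ⟨c', hc'.1⟩ : ↥A) : G) = ((fB' ⟨c', hc'.2⟩ : ↥B) : G) ∧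
      ((fA' ⟨c', hc'.1⟩ : ↥A) : G) ∈ A ⊓ B := by
    intro c' hc'
    constructor
    · rw [hresA' c' hc', hresB' c' hc']
    · rw [hresA' c' hc']; exact (fΓ.symm ⟨c', hc'⟩).2
  -- the glued maps
  set fG : G → G' :=
    fun g => ((fA ⟨aD g, haD g⟩ : ↥A') : G') * ((fB ⟨bD g, hbD g⟩ : ↥B') : G') with hfG_def
  set fG' : G' → G :=
    fun g' => ((fA' ⟨aD' g', haD' g'⟩ : ↥A) : G) * ((fB' ⟨bD' g', hbD' g'⟩ : ↥B) : G) with hfG'_def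
  have fGdef : ∀ g : G,
      fG g = ((fA ⟨aD g, haD g⟩ : ↥A') : G') * ((fB ⟨bD g, hbD g⟩ : ↥B') : G') :=
    fun g => congrFun hfG_def g
  have fG'def : ∀ g' : G',
      fG' g' = ((fA' ⟨aD' g', haD' g'⟩ : ↥A) : G) * ((fB' ⟨bD' g', hbD' g'⟩ : ↥B) : G) :=
    fun g' => congrFun hfG'_def g'
  have wdG : ∀ (a : ↥A) (b : ↥B),
      fG ((a : G) * b) = ((fA a : ↥A') : G') * ((fB b : ↥B') : G') := by
    intro a b
    exact glue_wd A B A' B' hcomm hcomm' fA fB fAmul fBmul fB1 hagree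
      ⟨aD ((a : G) * b), haD _⟩ a ⟨bD ((a : G) * b), hbD _⟩ b (habD ((a : G) * b)).symm
  have wdG' : ∀ (a' : ↥A') (b' : ↥B'),
      fG' ((a' : G') * b') = ((fA' a' : ↥A) : G) * ((fB' b' : ↥B) : G) := by
    intro a' b'
    exact glue_wd A' B' A B hcomm' hcomm fA' fB' fA'mul fB'mul fB'1 hagree'
      ⟨aD' ((a' : G') * b'), haD' _⟩ a' ⟨bD' ((a' : G') * b'), hbD' _⟩ b' (habD' ((a' : G') * b')).symm
  -- the glued homotopies
  set HGf : I × G → G := fun p =>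
    ((HA (p.1, ⟨aD p.2, haD p.2⟩) : ↥A) : G) * ((HB (p.1, ⟨bD p.2, hbD p.2⟩) : ↥B) : G)
    with hHGf_def
  set HG'f : I × G' → G' := fun p =>
    ((HA' (p.1, ⟨aD' p.2, haD' p.2⟩) : ↥A') : G') * ((HB' (p.1, ⟨bD' p.2, hbD' p.2⟩) : ↥B') : G')
    with hHG'f_def
  have HGdef : ∀ p : I × G, HGf p =
      ((HA (p.1, ⟨aD p.2, haD p.2⟩) : ↥A) : G) * ((HB (p.1, ⟨bD p.2, hbD p.2⟩) : ↥B) : G) :=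
    fun p => congrFun hHGf_def p
  have HG'def : ∀ p : I × G', HG'f p =
      ((HA' (p.1, ⟨aD' p.2, haD' p.2⟩) : ↥A') : G') * ((HB' (p.1, ⟨bD' p.2, hbD' p.2⟩) : ↥B') : G') :=
    fun p => congrFun hHG'f_def p
  have wdH : ∀ (t : I) (a : ↥A) (b : ↥B),
      HGf (t, (a : G) * b) = ((HA (t, a) : ↥A) : G) * ((HB (t, b) : ↥B) : G) := by
    intro t a b
    have hmulA : ∀ c ∈ (A ⊓ B).subgroupOf A, ∀ x, HA (t, c * x) = HA (t, c) * HA (t, x) := by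
      intro c hc x; rw [HAeqv t c hc x, HAfix t c hc]
    have hmulB : ∀ c ∈ (A ⊓ B).subgroupOf B, ∀ x, HB (t, c * x) = HB (t, c) * HB (t, x) := by
      intro c hc x; rw [HBeqv t c hc x, HBfix t c hc]
    have h1B : HB (t, 1) = 1 := HBfix t 1 (one_mem _)
    have hagH : ∀ c : G, ∀ hc : c ∈ A ⊓ B,
        ((HA (t, ⟨c, hc.1⟩) : ↥A) : G) = ((HB (t, ⟨c, hc.2⟩) : ↥B) : G) ∧
        ((HA (t, ⟨c, hc.1⟩) : ↥A) : G) ∈ A ⊓ B := by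
      intro c hc
      have m1 : (⟨c, hc.1⟩ : ↥A) ∈ (A ⊓ B).subgroupOf A := by
        rw [Subgroup.mem_subgroupOf]; exact hc
      have m2 : (⟨c, hc.2⟩ : ↥B) ∈ (A ⊓ B).subgroupOf B := by
        rw [Subgroup.mem_subgroupOf]; exact hc
      rw [HAfix t _ m1, HBfix t _ m2]
      exact ⟨rfl, hc⟩
    exact glue_wd A B A B hcomm hcomm (fun x => HA (t, x)) (fun x => HB (t, x))
      hmulA hmulB h1B hagH ⟨aD _, haD _⟩ a ⟨bD _, hbD _⟩ b (habD ((a : G) * b)).symm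
  have wdH' : ∀ (t : I) (a' : ↥A') (b' : ↥B'),
      HG'f (t, (a' : G') * b') = ((HA' (t, a') : ↥A') : G') * ((HB' (t, b') : ↥B') : G') := by
    intro t a' b'
    have hmulA : ∀ c ∈ (A' ⊓ B').subgroupOf A', ∀ x, HA' (t, c * x) = HA' (t, c) * HA' (t, x) := by
      intro c hc x; rw [HA'eqv t c hc x, HA'fix t c hc]
    have hmulB : ∀ c ∈ (A' ⊓ B').subgroupOf B', ∀ x, HB' (t, c * x) = HB' (t, c) * HB' (t, x) := by
      intro c hc x; rw [HB'eqv t c hc x, HB'fix t c hc]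
    have h1B : HB' (t, 1) = 1 := HB'fix t 1 (one_mem _)
    have hagH : ∀ c : G', ∀ hc : c ∈ A' ⊓ B',
        ((HA' (t, ⟨c, hc.1⟩) : ↥A') : G') = ((HB' (t, ⟨c, hc.2⟩) : ↥B') : G') ∧
        ((HA' (t, ⟨c, hc.1⟩) : ↥A') : G') ∈ A' ⊓ B' := by
      intro c hc
      have m1 : (⟨c, hc.1⟩ : ↥A') ∈ (A' ⊓ B').subgroupOf A' := by
        rw [Subgroup.mem_subgroupOf]; exact hc
      have m2 : (⟨c, hc.2⟩ : ↥B') ∈ (A' ⊓ B').subgroupOf B' := by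
        rw [Subgroup.mem_subgroupOf]; exact hc
      rw [HA'fix t _ m1, HB'fix t _ m2]
      exact ⟨rfl, hc⟩
    exact glue_wd A' B' A' B' hcomm' hcomm' (fun x => HA' (t, x)) (fun x => HB' (t, x))
      hmulA hmulB h1B hagH ⟨aD' _, haD' _⟩ a' ⟨bD' _, hbD' _⟩ b' (habD' ((a' : G') * b')).symm
  -- continuity via the quotient maps
  haveI : CompactSpace ↥A := isCompact_iff_compactSpace.mp hA.isCompact
  haveI : CompactSpace ↥B := isCompact_iff_compactSpace.mp hB.isCompact
  haveI : CompactSpace ↥A' := isCompact_iff_compactSpace.mp hA'.isCompact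
  haveI : CompactSpace ↥B' := isCompact_iff_compactSpace.mp hB'.isCompact
  have contm : Continuous (fun p : ↥A × ↥B => (p.1 : G) * p.2) :=
    (continuous_subtype_val.comp continuous_fst).mul (continuous_subtype_val.comp continuous_snd)
  have surjm : Function.Surjective (fun p : ↥A × ↥B => (p.1 : G) * p.2) := fun g =>
    ⟨(⟨aD g, haD g⟩, ⟨bD g, hbD g⟩), (habD g).symm⟩
  have qm : IsQuotientMap (fun p : ↥A × ↥B => (p.1 : G) * p.2) :=
    contm.isClosedMap.isQuotientMap contm surjm
  have contm' : Continuous (fun p : ↥A' × ↥B' => (p.1 : G') * p.2) :=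
    (continuous_subtype_val.comp continuous_fst).mul (continuous_subtype_val.comp continuous_snd)
  have surjm' : Function.Surjective (fun p : ↥A' × ↥B' => (p.1 : G') * p.2) := fun g =>
    ⟨(⟨aD' g, haD' g⟩, ⟨bD' g, hbD' g⟩), (habD' g).symm⟩
  have qm' : IsQuotientMap (fun p : ↥A' × ↥B' => (p.1 : G') * p.2) :=
    contm'.isClosedMap.isQuotientMap contm' surjm'
  have contfG : Continuous fG := by
    rw [qm.continuous_iff]
    have he : (fG ∘ fun p : ↥A × ↥B => (p.1 : G) * p.2)
        = fun p : ↥A × ↥B => ((fA p.1 : ↥A') : G') * ((fB p.2 : ↥B') : G') := by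
      funext p; exact wdG p.1 p.2
    rw [he]
    exact (continuous_subtype_val.comp (cfA.comp continuous_fst)).mul
      (continuous_subtype_val.comp (cfB.comp continuous_snd))
  have contfG' : Continuous fG' := by
    rw [qm'.continuous_iff]
    have he : (fG' ∘ fun p : ↥A' × ↥B' => (p.1 : G') * p.2)
        = fun p : ↥A' × ↥B' => ((fA' p.1 : ↥A) : G) * ((fB' p.2 : ↥B) : G) := by
      funext p; exact wdG' p.1 p.2
    rw [he]
    exact (continuous_subtype_val.comp (cfA'.comp continuous_fst)).mul
      (continuous_subtype_val.comp (cfB'.comp continuous_snd))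
  have contm2 : Continuous (fun p : I × (↥A × ↥B) => (p.1, (p.2.1 : G) * p.2.2)) :=
    continuous_fst.prodMk
      ((continuous_subtype_val.comp (continuous_fst.comp continuous_snd)).mul
        (continuous_subtype_val.comp (continuous_snd.comp continuous_snd)))
  have surjm2 : Function.Surjective (fun p : I × (↥A × ↥B) => (p.1, (p.2.1 : G) * p.2.2)) := by
    rintro ⟨t, g⟩
    exact ⟨(t, (⟨aD g, haD g⟩, ⟨bD g, hbD g⟩)), by
      show (t, aD g * bD g) = (t, g); rw [← habD g]⟩
  have qm2 : IsQuotientMap (fun p : I × (↥A × ↥B) => (p.1, (p.2.1 : G) * p.2.2)) :=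
    contm2.isClosedMap.isQuotientMap contm2 surjm2
  have contHG : Continuous HGf := by
    rw [qm2.continuous_iff]
    have he : (HGf ∘ fun p : I × (↥A × ↥B) => (p.1, (p.2.1 : G) * p.2.2))
        = fun p : I × (↥A × ↥B) =>
          ((HA (p.1, p.2.1) : ↥A) : G) * ((HB (p.1, p.2.2) : ↥B) : G) := by
      funext p; exact wdH p.1 p.2.1 p.2.2
    rw [he]
    exact (continuous_subtype_val.comp (HA.continuous.comp
        (continuous_fst.prodMk (continuous_fst.comp continuous_snd)))).mul
      (continuous_subtype_val.comp (HB.continuous.comp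
        (continuous_fst.prodMk (continuous_snd.comp continuous_snd))))
  have contm2' : Continuous (fun p : I × (↥A' × ↥B') => (p.1, (p.2.1 : G') * p.2.2)) :=
    continuous_fst.prodMk
      ((continuous_subtype_val.comp (continuous_fst.comp continuous_snd)).mul
        (continuous_subtype_val.comp (continuous_snd.comp continuous_snd)))
  have surjm2' : Function.Surjective (fun p : I × (↥A' × ↥B') => (p.1, (p.2.1 : G') * p.2.2)) := by
    rintro ⟨t, g⟩
    exact ⟨(t, (⟨aD' g, haD' g⟩, ⟨bD' g, hbD' g⟩)), by
      show (t, aD' g * bD' g) = (t, g); rw [← habD' g]⟩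
  have qm2' : IsQuotientMap (fun p : I × (↥A' × ↥B') => (p.1, (p.2.1 : G') * p.2.2)) :=
    contm2'.isClosedMap.isQuotientMap contm2' surjm2'
  have contHG' : Continuous HG'f := by
    rw [qm2'.continuous_iff]
    have he : (HG'f ∘ fun p : I × (↥A' × ↥B') => (p.1, (p.2.1 : G') * p.2.2))
        = fun p : I × (↥A' × ↥B') =>
          ((HA' (p.1, p.2.1) : ↥A') : G') * ((HB' (p.1, p.2.2) : ↥B') : G') := by
      funext p; exact wdH' p.1 p.2.1 p.2.2
    rw [he]
    exact (continuous_subtype_val.comp (HA'.continuous.comp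
        (continuous_fst.prodMk (continuous_fst.comp continuous_snd)))).mul
      (continuous_subtype_val.comp (HB'.continuous.comp
        (continuous_fst.prodMk (continuous_snd.comp continuous_snd))))
  -- pointwise properties of `fG`
  have fGval : ∀ c : G, ∀ hc : c ∈ A ⊓ B, fG c = ((fA ⟨c, hc.1⟩ : ↥A') : G') := by
    intro c hc
    have h2 := wdG ⟨c, hc.1⟩ 1
    have e : ((⟨c, hc.1⟩ : ↥A) : G) * ((1 : ↥B) : G) = c := by simp
    rw [e, fB1] at h2
    simpa using h2
  have fGgam : ∀ c : G, ∀ hc : c ∈ A ⊓ B, fG c = ((fΓ ⟨c, hc⟩ : ↥(A' ⊓ B')) : G') := by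
    intro c hc; rw [fGval c hc, hresA c hc]
  have fG1 : fG 1 = 1 := by
    have h2 := wdG 1 1
    have e : ((1 : ↥A) : G) * ((1 : ↥B) : G) = 1 := by simp
    rw [e, fA1, fB1] at h2
    simpa using h2
  have fGmul : ∀ c ∈ A ⊓ B, ∀ x : G, fG (c * x) = fG c * fG x := by
    intro c hc x
    have hm : (⟨c, hc.1⟩ : ↥A) ∈ (A ⊓ B).subgroupOf A := by
      rw [Subgroup.mem_subgroupOf]; exact hc
    have h2 := wdG ((⟨c, hc.1⟩ : ↥A) * ⟨aD x, haD x⟩) ⟨bD x, hbD x⟩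
    have e : (((⟨c, hc.1⟩ : ↥A) * ⟨aD x, haD x⟩ : ↥A) : G) * ((⟨bD x, hbD x⟩ : ↥B) : G)
        = c * x := by
      push_cast
      rw [mul_assoc, ← habD x]
    rw [e, fAmul _ hm _] at h2
    rw [h2, fGval c hc, fGdef x]
    push_cast
    rw [mul_assoc]
  have fG'val : ∀ c' : G', ∀ hc' : c' ∈ A' ⊓ B', fG' c' = ((fA' ⟨c', hc'.1⟩ : ↥A) : G) := by
    intro c' hc'
    have h2 := wdG' ⟨c', hc'.1⟩ 1
    have e : ((⟨c', hc'.1⟩ : ↥A') : G') * ((1 : ↥B') : G') = c' := by simp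
    rw [e, fB'1] at h2
    simpa using h2
  have fG'1 : fG' 1 = 1 := by
    have h2 := wdG' 1 1
    have e : ((1 : ↥A') : G') * ((1 : ↥B') : G') = 1 := by simp
    rw [e, fA'1, fB'1] at h2
    simpa using h2
  have fG'mul : ∀ c' ∈ A' ⊓ B', ∀ x' : G', fG' (c' * x') = fG' c' * fG' x' := by
    intro c' hc' x'
    have hm : (⟨c', hc'.1⟩ : ↥A') ∈ (A' ⊓ B').subgroupOf A' := by
      rw [Subgroup.mem_subgroupOf]; exact hc'
    have h2 := wdG' ((⟨c', hc'.1⟩ : ↥A') * ⟨aD' x', haD' x'⟩) ⟨bD' x', hbD' x'⟩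
    have e : (((⟨c', hc'.1⟩ : ↥A') * ⟨aD' x', haD' x'⟩ : ↥A') : G')
        * ((⟨bD' x', hbD' x'⟩ : ↥B') : G') = c' * x' := by
      push_cast
      rw [mul_assoc, ← habD' x']
    rw [e, fA'mul _ hm _] at h2
    rw [h2, fG'val c' hc', fG'def x']
    push_cast
    rw [mul_assoc]
  have fGbij : Set.BijOn fG ((A ⊓ B : Subgroup G) : Set G) ((A' ⊓ B' : Subgroup G') : Set G') := by
    refine ⟨?_, ?_, ?_⟩
    · intro c hc
      rw [SetLike.mem_coe] at hc
      rw [fGgam c hc]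
      exact (fΓ ⟨c, hc⟩).2
    · intro c hc d hd h
      rw [SetLike.mem_coe] at hc hd
      rw [fGgam c hc, fGgam d hd] at h
      have h4 := fΓ.injective (Subtype.ext h)
      exact congrArg Subtype.val h4
    · intro c' hc'
      rw [SetLike.mem_coe] at hc'
      refine ⟨((fΓ.symm ⟨c', hc'⟩ : ↥(A ⊓ B)) : G), (fΓ.symm ⟨c', hc'⟩).2, ?_⟩
      rw [fGgam _ (fΓ.symm ⟨c', hc'⟩).2]
      show ((fΓ (fΓ.symm ⟨c', hc'⟩) : ↥(A' ⊓ B')) : G') = c'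
      rw [fΓ.apply_symm_apply]
  -- properties of the glued homotopies
  have HG0 : ∀ x : G, HGf (0, x) = x := by
    intro x
    rw [HGdef, HA0, HB0]
    exact (habD x).symm
  have HG1 : ∀ x : G, HGf (1, x) = fG' (fG x) := by
    intro x
    have h3 : fG' (fG x)
        = ((fA' (fA ⟨aD x, haD x⟩) : ↥A) : G) * ((fB' (fB ⟨bD x, hbD x⟩) : ↥B) : G) := by
      rw [fGdef x]
      exact wdG' (fA ⟨aD x, haD x⟩) (fB ⟨bD x, hbD x⟩)
    rw [h3, HGdef, HA1, HB1]
  have HGfix : ∀ t : I, ∀ c ∈ A ⊓ B, HGf (t, c) = c := by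
    intro t c hc
    have hm : (⟨c, hc.1⟩ : ↥A) ∈ (A ⊓ B).subgroupOf A := by
      rw [Subgroup.mem_subgroupOf]; exact hc
    have h2 := wdH t ⟨c, hc.1⟩ 1
    have e : ((⟨c, hc.1⟩ : ↥A) : G) * ((1 : ↥B) : G) = c := by simp
    rw [e, HAfix t _ hm, HBfix t 1 (one_mem _)] at h2
    simpa using h2
  have HGeqv : ∀ t : I, ∀ c ∈ A ⊓ B, ∀ x : G, HGf (t, c * x) = c * HGf (t, x) := by
    intro t c hc x
    have hm : (⟨c, hc.1⟩ : ↥A) ∈ (A ⊓ B).subgroupOf A := by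
      rw [Subgroup.mem_subgroupOf]; exact hc
    have h2 := wdH t ((⟨c, hc.1⟩ : ↥A) * ⟨aD x, haD x⟩) ⟨bD x, hbD x⟩
    have e : (((⟨c, hc.1⟩ : ↥A) * ⟨aD x, haD x⟩ : ↥A) : G) * ((⟨bD x, hbD x⟩ : ↥B) : G)
        = c * x := by
      push_cast
      rw [mul_assoc, ← habD x]
    rw [e, HAeqv t _ hm _] at h2
    rw [h2, HGdef (t, x)]
    push_cast
    rw [mul_assoc]
  have HG'0 : ∀ x' : G', HG'f (0, x') = x' := by
    intro x'
    rw [HG'def, HA'0, HB'0]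
    exact (habD' x').symm
  have HG'1 : ∀ x' : G', HG'f (1, x') = fG (fG' x') := by
    intro x'
    have h3 : fG (fG' x')
        = ((fA (fA' ⟨aD' x', haD' x'⟩) : ↥A') : G') * ((fB (fB' ⟨bD' x', hbD' x'⟩) : ↥B') : G') := by
      rw [fG'def x']
      exact wdG (fA' ⟨aD' x', haD' x'⟩) (fB' ⟨bD' x', hbD' x'⟩)
    rw [h3, HG'def, HA'1, HB'1]
  have HG'fix : ∀ t : I, ∀ c' ∈ A' ⊓ B', HG'f (t, c') = c' := by
    intro t c' hc'
    have hm : (⟨c', hc'.1⟩ : ↥A') ∈ (A' ⊓ B').subgroupOf A' := by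
      rw [Subgroup.mem_subgroupOf]; exact hc'
    have h2 := wdH' t ⟨c', hc'.1⟩ 1
    have e : ((⟨c', hc'.1⟩ : ↥A') : G') * ((1 : ↥B') : G') = c' := by simp
    rw [e, HA'fix t _ hm, HB'fix t 1 (one_mem _)] at h2
    simpa using h2
  have HG'eqv : ∀ t : I, ∀ c' ∈ A' ⊓ B', ∀ x' : G', HG'f (t, c' * x') = c' * HG'f (t, x') := by
    intro t c' hc' x'
    have hm : (⟨c', hc'.1⟩ : ↥A') ∈ (A' ⊓ B').subgroupOf A' := by
      rw [Subgroup.mem_subgroupOf]; exact hc'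
    have h2 := wdH' t ((⟨c', hc'.1⟩ : ↥A') * ⟨aD' x', haD' x'⟩) ⟨bD' x', hbD' x'⟩
    have e : (((⟨c', hc'.1⟩ : ↥A') * ⟨aD' x', haD' x'⟩ : ↥A') : G')
        * ((⟨bD' x', hbD' x'⟩ : ↥B') : G') = c' * x' := by
      push_cast
      rw [mul_assoc, ← habD' x']
    rw [e, HA'eqv t _ hm _] at h2
    rw [h2, HG'def (t, x')]
    push_cast
    rw [mul_assoc]
  -- assemble
  refine ⟨fG, ⟨fG', contfG, contfG', fGbij, fG1, fGmul, fG'1, fG'mul,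
      ⟨⟨HGf, contHG⟩, HG0, HG1, HGfix, HGeqv⟩,
      ⟨⟨HG'f, contHG'⟩, HG'0, HG'1, HG'fix, HG'eqv⟩⟩, ?_, ?_, ?_⟩
  · intro a ha b hb
    exact wdG ⟨a, ha⟩ ⟨b, hb⟩
  · intro a ha
    have h2 := wdG ⟨a, ha⟩ 1
    have e : ((⟨a, ha⟩ : ↥A) : G) * ((1 : ↥B) : G) = a := by simp
    rw [e, fB1] at h2
    simpa using h2
  · intro b hb
    have h2 := wdG 1 ⟨b, hb⟩
    have e : ((1 : ↥A) : G) * ((⟨b, hb⟩ : ↥B) : G) = b := by simp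
    rw [e, fA1] at h2
    simpa using h2
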